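/- Milnor's exercise (even core of the paper's 'super Milnor's exercise'): let M be a smooth manifold without boundary modeled on ℝ^n (finite-dimensional), Hausdorff and second countable. Then for every unital ℝ-algebra homomorphism φ : C^∞(M) → ℝ there exists a unique point x ∈ M such that φ(f) = f(x) for every f ∈ C^∞(M). Thus the ℝ-algebra homomorphisms C^∞(M) → ℝ are exactly the evaluations at points of M. -/

import Mathlib

open scoped Manifold

open Set

/-- On a σ-compact manifold there is a smooth exhaustion function: a smooth
function whose sublevel sets are compact. -/
theorem exists_smooth_exhaustion {n : ℕ} {M : Type*} [TopologicalSpace M]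
    [ChartedSpace (EuclideanSpace ℝ (Fin n)) M]
    [IsManifold (𝓡 n) (⊤ : ℕ∞) M] [T2Space M] [SigmaCompactSpace M] :
    ∃ h : C^(⊤ : ℕ∞)⟮𝓡 n, M; ℝ⟯, ∀ c : ℝ, IsCompact {x : M | h x ≤ c} := by
  haveI : LocallyCompactSpace M :=
    ChartedSpace.locallyCompactSpace (EuclideanSpace ℝ (Fin n)) M
  obtain ⟨K⟩ : Nonempty (CompactExhaustion M) := ⟨CompactExhaustion.choice M⟩
  obtain ⟨h, hh⟩ : ∃ h : C^(⊤ : ℕ∞)⟮𝓡 n, M; 𝓘(ℝ, ℝ), ℝ⟯,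
      ∀ x, h x ∈ Ici ((K.find x : ℕ) : ℝ) := by
    apply exists_contMDiffMap_forall_mem_convex_of_local_const (𝓡 n)
      (t := fun x => Ici ((K.find x : ℕ) : ℝ)) (fun x => convex_Ici _)
    intro x
    refine ⟨((K.find x + 1 : ℕ) : ℝ), ?_⟩
    have hx : x ∈ interior (K (K.find x + 1)) :=
      K.subset_interior_succ _ (K.mem_find x)
    filter_upwards [isOpen_interior.mem_nhds hx] with y hy
    have : K.find y ≤ K.find x + 1 := K.mem_iff_find_le.mp (interior_subset hy)
    simp only [mem_Ici]
    exact_mod_cast this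
  refine ⟨h, fun c => ?_⟩
  have hsub : {x : M | h x ≤ c} ⊆ K ⌈c⌉₊ := by
    intro x hx
    have h1 : ((K.find x : ℕ) : ℝ) ≤ c := le_trans (hh x) hx
    have h2 : K.find x ≤ ⌈c⌉₊ := by
      have := h1.trans (Nat.le_ceil c)
      exact_mod_cast this
    exact K.mem_iff_find_le.mpr h2
  exact (K.isCompact _).of_isClosed_subset
    (isClosed_le h.contMDiff.continuous continuous_const) hsub

/-- **Milnor's exercise**: every unital `ℝ`-algebra homomorphism from the algebra
`C^∞(M)` of smooth real-valued functions on a finite-dimensional, Hausdorff, second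
countable smooth manifold `M` without boundary is evaluation at a unique point. -/
theorem milnor_exercise {n : ℕ} {M : Type*} [TopologicalSpace M]
    [ChartedSpace (EuclideanSpace ℝ (Fin n)) M]
    [IsManifold (𝓡 n) (⊤ : ℕ∞) M] [T2Space M] [SecondCountableTopology M]
    (φ : C^(⊤ : ℕ∞)⟮𝓡 n, M; ℝ⟯ →ₐ[ℝ] ℝ) :
    ∃! x : M, ∀ f : C^(⊤ : ℕ∞)⟮𝓡 n, M; ℝ⟯, φ f = f x := by
  classical
  haveI : LocallyCompactSpace M :=
    ChartedSpace.locallyCompactSpace (EuclideanSpace ℝ (Fin n)) M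
  set A := C^(⊤ : ℕ∞)⟮𝓡 n, M; ℝ⟯
  -- pointwise evaluation of algebra operations
  have evC : ∀ (c : ℝ) (x : M), (algebraMap ℝ A c) x = c := fun c x => rfl
  have evMul : ∀ (f g : A) (x : M), (f * g) x = f x * g x := fun f g x => rfl
  have evAdd : ∀ (f g : A) (x : M), (f + g) x = f x + g x := fun f g x => rfl
  have evSub : ∀ (f g : A) (x : M), (f - g) x = f x - g x := fun f g x => rfl
  -- existence
  have hex : ∃ x : M, ∀ f : A, φ f = f x := by
    by_contra hcon
    push_neg at hcon
    obtain ⟨h, hcpt⟩ := exists_smooth_exhaustion (n := n) (M := M)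
    set c : ℝ := φ h with hc
    -- auxiliary squared functions
    set g₀ : A := (h - algebraMap ℝ A c) * (h - algebraMap ℝ A c) with hg₀
    have φg₀ : φ g₀ = 0 := by simp [hg₀, map_mul, map_sub, hc]; exact sub_eq_zero.mpr (φ.commutes (φ h)).symm
    have g₀nn : ∀ x, 0 ≤ g₀ x := fun x => by
      rw [hg₀, evMul]; exact mul_self_nonneg _
    have g₀pos : ∀ x, h x ≠ c → 0 < g₀ x := fun x hx => by
      rw [hg₀, evMul, evSub, evC]
      exact mul_self_pos.mpr (sub_ne_zero.mpr hx)
    -- for each point, a nonnegative function in the kernel of φ, positive at that point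
    have key : ∀ x : M, ∃ q : A, φ q = 0 ∧ (∀ y, 0 ≤ q y) ∧ 0 < q x := by
      intro x
      obtain ⟨f, hf⟩ := hcon x
      refine ⟨(f - algebraMap ℝ A (φ f)) * (f - algebraMap ℝ A (φ f)),
        by simp [map_mul, map_sub]; exact sub_eq_zero.mpr (φ.commutes (φ f)).symm, fun y => by rw [evMul]; exact mul_self_nonneg _, ?_⟩
      rw [evMul, evSub, evC]
      exact mul_self_pos.mpr (sub_ne_zero.mpr fun h' => hf h'.symm)
    choose q φq qnn qpos using key
    have evSum : ∀ (t : Finset M) (y : M), (∑ i ∈ t, q i) y = ∑ i ∈ t, q i y := by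
      intro t y
      induction t using Finset.induction with
      | empty => rfl
      | insert a t hnotmem ih => rw [Finset.sum_insert hnotmem, Finset.sum_insert hnotmem, evAdd, ih]
    -- the compact level set of h at c
    have hK : IsCompact {x : M | h x = c} :=
      (hcpt c).of_isClosed_subset
        (isClosed_eq h.contMDiff.continuous continuous_const)
        (fun x hx => le_of_eq hx)
    -- cover it by the positivity sets of the q's
    obtain ⟨s, hs⟩ : ∃ s : Finset M, {x : M | h x = c} ⊆ ⋃ i ∈ s, {y : M | 0 < q i y} := by
      apply hK.elim_finite_subcover (fun i : M => {y : M | 0 < (q i) y})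
      · intro i
        exact isOpen_lt continuous_const (q i).contMDiff.continuous
      · intro x hx
        exact Set.mem_iUnion.mpr ⟨x, qpos x⟩
    set g : A := g₀ + ∑ i ∈ s, q i with hg
    have φg : φ g = 0 := by
      simp [hg, map_sum, φg₀, φq]
    have gpos : ∀ y, 0 < g y := by
      intro y
      have sum_nn : 0 ≤ (∑ i ∈ s, q i) y := by
        rw [evSum]
        exact Finset.sum_nonneg fun i _ => qnn i y
      by_cases hy : h y = c
      · obtain ⟨i, hi, hiy⟩ := Set.mem_iUnion₂.mp (hs hy)
        have : (0 : ℝ) < (∑ i ∈ s, q i) y := by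
          rw [evSum]
          exact Finset.sum_pos' (fun j _ => qnn j y) ⟨i, hi, hiy⟩
        rw [hg, evAdd]
        exact add_pos_of_nonneg_of_pos (g₀nn y) this
      · rw [hg, evAdd]
        exact add_pos_of_pos_of_nonneg (g₀pos y hy) sum_nn
    -- g is invertible, contradiction with φ g = 0
    set ginv : A := ⟨fun y => (g y)⁻¹,
      g.contMDiff.inv₀ fun y => (gpos y).ne'⟩ with hginv
    have hmul : g * ginv = 1 := by
      ext y
      rw [evMul]
      exact mul_inv_cancel₀ (gpos y).ne'
    have : (1 : ℝ) = 0 := by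
      have := congrArg φ hmul
      rw [map_mul, map_one, φg, zero_mul] at this
      exact this.symm
    exact one_ne_zero this
  obtain ⟨x, hx⟩ := hex
  refine ⟨x, hx, fun y hy => ?_⟩
  by_contra hne
  obtain ⟨f, hf0, hf1, -⟩ := exists_contMDiffMap_zero_one_of_isClosed (𝓡 n)
    (isClosed_singleton (x := y)) (isClosed_singleton (x := x))
    (by simpa [Set.disjoint_singleton] using hne)
  have : f y = f x := by rw [← hx f, ← hy f]
  rw [hf0 rfl, hf1 rfl] at this
  simp at this
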